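/- Let m > 0 and let a₁, a₂ ∈ (−∞, 4m²), and let A(γ) := (a₁ − γ)·(a₂ − γ)·J(γ) for γ ∈ (−∞, 4m²). Then for every γ < 4m², A is twice differentiable at γ, its second derivative is given by A″(γ) = ∫_{4m²}^∞ 2·ρ(M)·(M − a₁)·(M − a₂)/(M − γ)³ dM, and A″(γ) > 0. -/

import Mathlib

open MeasureTheory Set Real

/-- The spectral density `ρ(M) = (1/(16π²M))·√(1 − 4m²/M)` for `M ≥ 4m²`, and `0` otherwise. -/
noncomputable def rho (m M : ℝ) : ℝ :=
  if 4 * m ^ 2 ≤ M then (1 / (16 * Real.pi ^ 2 * M)) * Real.sqrt (1 - 4 * m ^ 2 / M) else 0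

/-- The Stieltjes transform `J(γ) = ∫_{4m²}^∞ ρ(M)/(M − γ) dM`. -/
noncomputable def Jfun (m γ : ℝ) : ℝ :=
  ∫ M in Set.Ici (4 * m ^ 2), rho m M / (M - γ)

open Filter

lemma Mpos {m M : ℝ} (hm : 0 < m) (hM : 4 * m ^ 2 ≤ M) : 0 < M := by nlinarith

lemma rho_nonneg {m M : ℝ} (hm : 0 < m) (hM : 4 * m ^ 2 ≤ M) : 0 ≤ rho m M := by
  have hMp := Mpos hm hM
  unfold rho
  rw [if_pos hM]
  have := Real.sqrt_nonneg (1 - 4 * m ^ 2 / M)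
  positivity

lemma rho_le {m M : ℝ} (hm : 0 < m) (hM : 4 * m ^ 2 ≤ M) :
    rho m M ≤ 1 / (16 * Real.pi ^ 2 * M) := by
  have hMp := Mpos hm hM
  unfold rho
  rw [if_pos hM]
  have h1 : Real.sqrt (1 - 4 * m ^ 2 / M) ≤ 1 := by
    rw [Real.sqrt_le_one]
    have : 0 ≤ 4 * m ^ 2 / M := by positivity
    linarith
  have h2 : 0 < 1 / (16 * Real.pi ^ 2 * M) := by positivity
  calc 1 / (16 * Real.pi ^ 2 * M) * Real.sqrt (1 - 4 * m ^ 2 / M)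
      ≤ 1 / (16 * Real.pi ^ 2 * M) * 1 := by
        apply mul_le_mul_of_nonneg_left h1 h2.le
    _ = 1 / (16 * Real.pi ^ 2 * M) := mul_one _

lemma measurable_rho (m : ℝ) : Measurable (rho m) := by
  unfold rho
  apply Measurable.ite (measurableSet_le measurable_const measurable_id)
  · fun_prop
  · exact measurable_const

lemma integrable_inv_sq {γ a : ℝ} (h : γ < a) :
    IntegrableOn (fun M => ((M - γ) ^ 2)⁻¹) (Ici a) := by
  rw [integrableOn_Ici_iff_integrableOn_Ioi]
  apply integrableOn_Ioi_deriv_of_nonneg' (g := fun M => -(M - γ)⁻¹) (l := 0)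
  · intro x hx
    have hx0 : x - γ ≠ 0 := by simp only [mem_Ici] at hx; nlinarith
    have h1 : HasDerivAt (fun M => M - γ) 1 x := by
      simpa using (hasDerivAt_id x).sub_const γ
    have h2 := (h1.inv hx0).neg
    refine h2.congr_deriv ?_
    field_simp
  · intro x hx
    positivity
  · have : Tendsto (fun M : ℝ => (M - γ)⁻¹) atTop (nhds 0) := by
      apply Tendsto.inv_tendsto_atTop
      exact tendsto_atTop_add_const_right _ (-γ) tendsto_id
    simpa using this.neg

lemma rho_div_le {m γ M : ℝ} (hm : 0 < m) (hγ : γ < 4 * m ^ 2) (k : ℕ) (hk : 1 ≤ k)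
    (hM : 4 * m ^ 2 ≤ M) :
    rho m M / (M - γ) ^ k ≤
      (1 / (16 * Real.pi ^ 2) * ((4 * m ^ 2 - γ) ^ (k - 1))⁻¹ * (1 + |γ| / (4 * m ^ 2))) *
        ((M - γ) ^ 2)⁻¹ := by
  have hM0 : 0 < M := Mpos hm hM
  have hd : 0 < 4 * m ^ 2 - γ := by linarith
  have hMγ : 4 * m ^ 2 - γ ≤ M - γ := by linarith
  have hMγ0 : 0 < M - γ := lt_of_lt_of_le hd hMγ
  set c := |γ| / (4 * m ^ 2) with hc
  have hm2 : (0:ℝ) < 4 * m ^ 2 := by positivity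
  have hc0 : 0 ≤ c := by positivity
  have hcmul : c * (4 * m ^ 2) = |γ| := div_mul_cancel₀ _ hm2.ne'
  have hpowk : 0 < (M - γ) ^ k := pow_pos hMγ0 k
  have hpowd : 0 < (4 * m ^ 2 - γ) ^ (k - 1) := pow_pos hd _
  have step1 : rho m M / (M - γ) ^ k ≤ (1 / (16 * Real.pi ^ 2 * M)) / (M - γ) ^ k :=
    (div_le_div_iff_of_pos_right hpowk).mpr (rho_le hm hM)
  have hsplit : (4 * m ^ 2 - γ) ^ (k - 1) * (M - γ) ≤ (M - γ) ^ k := by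
    have : (M - γ) ^ k = (M - γ) ^ (k - 1) * (M - γ) := by
      rw [← pow_succ]
      congr 1
      omega
    rw [this]
    exact mul_le_mul_of_nonneg_right (pow_le_pow_left₀ hd.le hMγ _) hMγ0.le
  have step2 : (1 / (16 * Real.pi ^ 2 * M)) / (M - γ) ^ k ≤
      (1 / (16 * Real.pi ^ 2 * M)) / ((4 * m ^ 2 - γ) ^ (k - 1) * (M - γ)) :=
    div_le_div_of_nonneg_left (by positivity) (by positivity) hsplit
  have step3 : (1 / (16 * Real.pi ^ 2 * M)) / ((4 * m ^ 2 - γ) ^ (k - 1) * (M - γ)) =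
      (1 / (16 * Real.pi ^ 2) * ((4 * m ^ 2 - γ) ^ (k - 1))⁻¹) * (1 / (M * (M - γ))) := by
    have hπ : Real.pi ≠ 0 := Real.pi_ne_zero
    field_simp
  have step4 : 1 / (M * (M - γ)) ≤ (1 + c) * ((M - γ) ^ 2)⁻¹ := by
    rw [← div_eq_mul_inv ((1:ℝ)+c), div_le_div_iff₀ (by positivity) (by positivity)]
    have hcM : -γ ≤ c * M := by nlinarith [abs_nonneg γ, neg_abs_le γ]
    nlinarith
  calc rho m M / (M - γ) ^ k
      ≤ (1 / (16 * Real.pi ^ 2 * M)) / (M - γ) ^ k := step1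
    _ ≤ (1 / (16 * Real.pi ^ 2 * M)) / ((4 * m ^ 2 - γ) ^ (k - 1) * (M - γ)) := step2
    _ = (1 / (16 * Real.pi ^ 2) * ((4 * m ^ 2 - γ) ^ (k - 1))⁻¹) * (1 / (M * (M - γ))) := step3
    _ ≤ (1 / (16 * Real.pi ^ 2) * ((4 * m ^ 2 - γ) ^ (k - 1))⁻¹) * ((1 + c) * ((M - γ) ^ 2)⁻¹) :=
        mul_le_mul_of_nonneg_left step4 (by positivity)
    _ = (1 / (16 * Real.pi ^ 2) * ((4 * m ^ 2 - γ) ^ (k - 1))⁻¹ * (1 + c)) * ((M - γ) ^ 2)⁻¹ := by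
        ring

lemma integrableOn_rho_div {m γ : ℝ} (hm : 0 < m) (hγ : γ < 4 * m ^ 2) (k : ℕ) (hk : 1 ≤ k) :
    IntegrableOn (fun M => rho m M / (M - γ) ^ k) (Ici (4 * m ^ 2)) := by
  apply Integrable.mono'
    ((integrable_inv_sq hγ).const_mul
      (1 / (16 * Real.pi ^ 2) * ((4 * m ^ 2 - γ) ^ (k - 1))⁻¹ * (1 + |γ| / (4 * m ^ 2))))
  · exact ((measurable_rho m).div ((measurable_id.sub measurable_const).pow
      measurable_const)).aestronglyMeasurable
  · filter_upwards [ae_restrict_mem measurableSet_Ici] with M hM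
    have hM' : 4 * m ^ 2 ≤ M := hM
    have hMγ0 : 0 < M - γ := by linarith
    rw [Real.norm_eq_abs, abs_of_nonneg (div_nonneg (rho_nonneg hm hM') (by positivity))]
    exact rho_div_le hm hγ k hk hM'

lemma meas_aux (m γ : ℝ) (k : ℕ) :
    AEStronglyMeasurable (fun M => rho m M / (M - γ) ^ k)
      (volume.restrict (Ici (4 * m ^ 2))) :=
  ((measurable_rho m).div ((measurable_id.sub measurable_const).pow
    measurable_const)).aestronglyMeasurable

-- key geometric fact on the ball
lemma ball_lemma {m γ M x : ℝ} (hγ : γ < 4 * m ^ 2) (hM : 4 * m ^ 2 ≤ M)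
    (hx : x ∈ Metric.ball γ ((4 * m ^ 2 - γ) / 2)) : (M - γ) / 2 ≤ M - x := by
  have := abs_lt.mp (mem_ball_iff_norm.mp hx)
  cases this; linarith

lemma hasDerivAt_Jfun {m : ℝ} (hm : 0 < m) {γ : ℝ} (hγ : γ < 4 * m ^ 2) :
    HasDerivAt (Jfun m) (∫ M in Set.Ici (4 * m ^ 2), rho m M / (M - γ) ^ 2) γ := by
  have hε : 0 < (4 * m ^ 2 - γ) / 2 := by linarith
  have key := hasDerivAt_integral_of_dominated_loc_of_deriv_le (μ := volume.restrict (Ici (4 * m ^ 2)))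
    (F := fun x M => rho m M / (M - x)) (F' := fun x M => rho m M / (M - x) ^ 2)
    (x₀ := γ) (bound := fun M => 4 * (rho m M / (M - γ) ^ 2)) (Metric.ball_mem_nhds γ hε)
    (Eventually.of_forall fun x => by
      simpa using meas_aux m x 1)
    (by have := integrableOn_rho_div hm hγ 1 le_rfl; simp only [pow_one] at this; exact this)
    (meas_aux m γ 2)
    ?_ ((integrableOn_rho_div hm hγ 2 one_le_two).const_mul 4) ?_
  · exact key.2
  · filter_upwards [ae_restrict_mem measurableSet_Ici] with M hM x hx
    have hM' : 4 * m ^ 2 ≤ M := hM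
    have h1 : (M - γ) / 2 ≤ M - x := ball_lemma hγ hM' hx
    have h2 : 0 < M - γ := by linarith
    have h3 : 0 < M - x := by linarith
    have hr := rho_nonneg hm hM'
    rw [Real.norm_eq_abs, abs_of_nonneg (by positivity)]
    have h4 : (M - γ) ^ 2 / 4 ≤ (M - x) ^ 2 := by nlinarith
    calc rho m M / (M - x) ^ 2 ≤ rho m M / ((M - γ) ^ 2 / 4) :=
          div_le_div_of_nonneg_left hr (by positivity) h4
      _ = 4 * (rho m M / (M - γ) ^ 2) := by rw [div_div_eq_mul_div]; ring
  · filter_upwards [ae_restrict_mem measurableSet_Ici] with M hM x hx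
    have hM' : 4 * m ^ 2 ≤ M := hM
    have h1 : (M - γ) / 2 ≤ M - x := ball_lemma hγ hM' hx
    have h2 : 0 < M - γ := by linarith
    have h3 : (M - x) ≠ 0 := by intro h; rw [h] at h1; linarith
    have hd : HasDerivAt (fun x : ℝ => M - x) (-1) x := by
      simpa using (hasDerivAt_id x).const_sub M
    have key := (hd.inv h3).const_mul (rho m M)
    have heq : (fun y : ℝ => rho m M / (M - y)) = fun y => rho m M * (M - y)⁻¹ := by
      funext y; rw [div_eq_mul_inv]
    have h5 : rho m M / (M - x) ^ 2 = rho m M * (- -1 / (M - x) ^ 2) := by ring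
    rw [heq, h5]; exact key

lemma hasDerivAt_I2 {m : ℝ} (hm : 0 < m) {γ : ℝ} (hγ : γ < 4 * m ^ 2) :
    HasDerivAt (fun x => ∫ M in Set.Ici (4 * m ^ 2), rho m M / (M - x) ^ 2)
      (∫ M in Set.Ici (4 * m ^ 2), 2 * rho m M / (M - γ) ^ 3) γ := by
  have hε : 0 < (4 * m ^ 2 - γ) / 2 := by linarith
  have key := hasDerivAt_integral_of_dominated_loc_of_deriv_le (μ := volume.restrict (Ici (4 * m ^ 2)))
    (F := fun x M => rho m M / (M - x) ^ 2) (F' := fun x M => 2 * rho m M / (M - x) ^ 3)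
    (x₀ := γ) (bound := fun M => 16 * (rho m M / (M - γ) ^ 3)) (Metric.ball_mem_nhds γ hε)
    (Eventually.of_forall fun x => meas_aux m x 2)
    (integrableOn_rho_div hm hγ 2 one_le_two)
    (by
      have := (meas_aux m γ 3).const_mul 2
      simpa [mul_div_assoc] using this)
    ?_ ((integrableOn_rho_div hm hγ 3 (by norm_num)).const_mul 16) ?_
  · exact key.2
  · filter_upwards [ae_restrict_mem measurableSet_Ici] with M hM x hx
    have hM' : 4 * m ^ 2 ≤ M := hM
    have h1 : (M - γ) / 2 ≤ M - x := ball_lemma hγ hM' hx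
    have h2 : 0 < M - γ := by linarith
    have h3 : 0 < M - x := by linarith
    have hr := rho_nonneg hm hM'
    rw [Real.norm_eq_abs, abs_of_nonneg (by positivity)]
    have h4 : (M - γ) ^ 3 / 8 ≤ (M - x) ^ 3 := by
      have := pow_le_pow_left₀ (by linarith : (0:ℝ) ≤ (M - γ) / 2) h1 3
      calc (M - γ) ^ 3 / 8 = ((M - γ) / 2) ^ 3 := by ring
        _ ≤ (M - x) ^ 3 := this
    calc 2 * rho m M / (M - x) ^ 3 = 2 * (rho m M / (M - x) ^ 3) := by ring
      _ ≤ 2 * (rho m M / ((M - γ) ^ 3 / 8)) := by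
          apply mul_le_mul_of_nonneg_left (div_le_div_of_nonneg_left hr (by positivity) h4)
          norm_num
      _ = 16 * (rho m M / (M - γ) ^ 3) := by rw [div_div_eq_mul_div]; ring
  · filter_upwards [ae_restrict_mem measurableSet_Ici] with M hM x hx
    have hM' : 4 * m ^ 2 ≤ M := hM
    have h1 : (M - γ) / 2 ≤ M - x := ball_lemma hγ hM' hx
    have h2 : 0 < M - γ := by linarith
    have h3 : 0 < M - x := by linarith
    have h3' : (M - x) ^ 2 ≠ 0 := by positivity
    have hd : HasDerivAt (fun x : ℝ => M - x) (-1) x := by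
      simpa using (hasDerivAt_id x).const_sub M
    have hp : HasDerivAt (fun x : ℝ => (M - x) ^ 2) (2 * (M - x) * (-1)) x := by
      simpa using hd.fun_pow 2
    have key := (hp.inv h3').const_mul (rho m M)
    have heq : (fun y : ℝ => rho m M / (M - y) ^ 2) = fun y => rho m M * ((M - y) ^ 2)⁻¹ := by
      funext y; rw [div_eq_mul_inv]
    have hne : M - x ≠ 0 := h3.ne'
    have h5 : 2 * rho m M / (M - x) ^ 3 = rho m M * (-(2 * (M - x) * -1) / ((M - x) ^ 2) ^ 2) := by
      field_simp
    rw [heq, h5]; exact key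

lemma rho_pos {m M : ℝ} (hm : 0 < m) (hM : 4 * m ^ 2 < M) : 0 < rho m M := by
  have hM0 : 0 < M := Mpos hm hM.le
  unfold rho
  rw [if_pos hM.le]
  have h1 : 4 * m ^ 2 / M < 1 := (div_lt_one hM0).mpr hM
  have h2 : 0 < Real.sqrt (1 - 4 * m ^ 2 / M) := Real.sqrt_pos.mpr (by linarith)
  positivity

theorem stmt_6 (m : ℝ) (hm : 0 < m) (a₁ a₂ : ℝ)
    (ha₁ : a₁ < 4 * m ^ 2) (ha₂ : a₂ < 4 * m ^ 2)
    (A : ℝ → ℝ) (hA : ∀ γ : ℝ, γ < 4 * m ^ 2 → A γ = (a₁ - γ) * (a₂ - γ) * Jfun m γ) :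
    ∀ γ : ℝ, γ < 4 * m ^ 2 →
      DifferentiableAt ℝ A γ ∧
      HasDerivAt (deriv A)
        (∫ M in Set.Ici (4 * m ^ 2), 2 * rho m M * (M - a₁) * (M - a₂) / (M - γ) ^ 3) γ ∧
      0 < ∫ M in Set.Ici (4 * m ^ 2), 2 * rho m M * (M - a₁) * (M - a₂) / (M - γ) ^ 3 := by
  intro γ hγ
  -- notation
  set I2 : ℝ → ℝ := fun x => ∫ M in Set.Ici (4 * m ^ 2), rho m M / (M - x) ^ 2 with hI2def
  set I3 : ℝ → ℝ := fun x => ∫ M in Set.Ici (4 * m ^ 2), 2 * (rho m M / (M - x) ^ 3) with hI3def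
  have hI3eq : ∀ x : ℝ, (∫ M in Set.Ici (4 * m ^ 2), 2 * rho m M / (M - x) ^ 3) = I3 x :=
    fun x => setIntegral_congr_fun measurableSet_Ici fun M _ => mul_div_assoc _ _ _
  set B : ℝ → ℝ := fun x => (a₁ - x) * (a₂ - x) * Jfun m x with hBdef
  set D : ℝ → ℝ := fun x => (2 * x - a₁ - a₂) * Jfun m x + (a₁ - x) * (a₂ - x) * I2 x with hDdef
  have hP : ∀ x : ℝ, HasDerivAt (fun y => (a₁ - y) * (a₂ - y)) (2 * x - a₁ - a₂) x := by
    intro x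
    have := ((hasDerivAt_id x).const_sub a₁).mul ((hasDerivAt_id x).const_sub a₂)
    refine this.congr_deriv ?_
    simp only [id_eq]
    ring
  have hlin : ∀ x : ℝ, HasDerivAt (fun y : ℝ => 2 * y - a₁ - a₂) 2 x := by
    intro x
    have := (((hasDerivAt_id x).const_mul 2).sub_const a₁).sub_const a₂
    simpa using this
  have hBx : ∀ x, x < 4 * m ^ 2 → HasDerivAt B (D x) x := by
    intro x hx
    exact (hP x).mul (hasDerivAt_Jfun hm hx)
  have hDx : HasDerivAt D
      (2 * Jfun m γ + 2 * (2 * γ - a₁ - a₂) * I2 γ + (a₁ - γ) * (a₂ - γ) * I3 γ) γ := by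
    have h1 := (hlin γ).mul (hasDerivAt_Jfun hm hγ)
    have h2 := (hP γ).mul (hasDerivAt_I2 hm hγ)
    rw [hI3eq γ] at h2
    have := h1.add h2
    refine this.congr_deriv ?_
    simp only [hI2def]
    ring
  -- eventual equalities
  have hIio : Iio (4 * m ^ 2) ∈ nhds γ := Iio_mem_nhds hγ
  have hAB : A =ᶠ[nhds γ] B := eventually_of_mem hIio fun x hx => hA x hx
  have hdiff : DifferentiableAt ℝ A γ :=
    ((hBx γ hγ).congr_of_eventuallyEq hAB).differentiableAt
  have hderivA : deriv A =ᶠ[nhds γ] D := by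
    filter_upwards [hIio] with x hx
    have hABx : A =ᶠ[nhds x] B := eventually_of_mem (Iio_mem_nhds hx) fun y hy => hA y hy
    rw [hABx.deriv_eq, (hBx x hx).deriv]
  -- integral identity
  have int1 : IntegrableOn (fun M => rho m M / (M - γ)) (Ici (4 * m ^ 2)) := by
    simpa using integrableOn_rho_div hm hγ 1 le_rfl
  have int2 : IntegrableOn (fun M => rho m M / (M - γ) ^ 2) (Ici (4 * m ^ 2)) :=
    integrableOn_rho_div hm hγ 2 one_le_two
  have int3 : IntegrableOn (fun M => rho m M / (M - γ) ^ 3) (Ici (4 * m ^ 2)) :=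
    integrableOn_rho_div hm hγ 3 (by norm_num)
  have hpoint : ∀ M ∈ Ici (4 * m ^ 2),
      2 * rho m M * (M - a₁) * (M - a₂) / (M - γ) ^ 3 =
        2 * (rho m M / (M - γ)) + (2 * (2 * γ - a₁ - a₂)) * (rho m M / (M - γ) ^ 2) +
          ((a₁ - γ) * (a₂ - γ)) * (2 * (rho m M / (M - γ) ^ 3)) := by
    intro M hM
    have hM' : 4 * m ^ 2 ≤ M := hM
    have hne : M - γ ≠ 0 := by intro h; simp only [mem_Ici] at hM; nlinarith [sub_eq_zero.mp h]
    field_simp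
    ring
  have ia : Integrable (fun M => 2 * (rho m M / (M - γ)))
      (volume.restrict (Ici (4 * m ^ 2))) := int1.const_mul 2
  have ib : Integrable (fun M => (2 * (2 * γ - a₁ - a₂)) * (rho m M / (M - γ) ^ 2))
      (volume.restrict (Ici (4 * m ^ 2))) := int2.const_mul _
  have ic : Integrable (fun M => ((a₁ - γ) * (a₂ - γ)) * (2 * (rho m M / (M - γ) ^ 3)))
      (volume.restrict (Ici (4 * m ^ 2))) := (int3.const_mul 2).const_mul _
  have iab : Integrable (fun M => 2 * (rho m M / (M - γ)) +
      (2 * (2 * γ - a₁ - a₂)) * (rho m M / (M - γ) ^ 2))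
      (volume.restrict (Ici (4 * m ^ 2))) := ia.add ib
  have hIeq : (∫ M in Set.Ici (4 * m ^ 2), 2 * rho m M * (M - a₁) * (M - a₂) / (M - γ) ^ 3) =
      2 * Jfun m γ + 2 * (2 * γ - a₁ - a₂) * I2 γ + (a₁ - γ) * (a₂ - γ) * I3 γ := by
    calc (∫ M in Set.Ici (4 * m ^ 2), 2 * rho m M * (M - a₁) * (M - a₂) / (M - γ) ^ 3)
        = ∫ M in Set.Ici (4 * m ^ 2),
            (2 * (rho m M / (M - γ)) + (2 * (2 * γ - a₁ - a₂)) * (rho m M / (M - γ) ^ 2) +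
              ((a₁ - γ) * (a₂ - γ)) * (2 * (rho m M / (M - γ) ^ 3))) :=
          setIntegral_congr_fun measurableSet_Ici hpoint
      _ = (∫ M in Set.Ici (4 * m ^ 2),
            (2 * (rho m M / (M - γ)) + (2 * (2 * γ - a₁ - a₂)) * (rho m M / (M - γ) ^ 2))) +
          ∫ M in Set.Ici (4 * m ^ 2), ((a₁ - γ) * (a₂ - γ)) * (2 * (rho m M / (M - γ) ^ 3)) :=
          integral_add iab ic
      _ = (∫ M in Set.Ici (4 * m ^ 2), 2 * (rho m M / (M - γ))) +
          (∫ M in Set.Ici (4 * m ^ 2), (2 * (2 * γ - a₁ - a₂)) * (rho m M / (M - γ) ^ 2)) +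
          ∫ M in Set.Ici (4 * m ^ 2), ((a₁ - γ) * (a₂ - γ)) * (2 * (rho m M / (M - γ) ^ 3)) := by
          rw [integral_add ia ib]
      _ = 2 * Jfun m γ + 2 * (2 * γ - a₁ - a₂) * I2 γ + (a₁ - γ) * (a₂ - γ) * I3 γ := by
          rw [integral_const_mul, integral_const_mul, integral_const_mul]
          rfl
  have hderiv2 : HasDerivAt (deriv A)
      (∫ M in Set.Ici (4 * m ^ 2), 2 * rho m M * (M - a₁) * (M - a₂) / (M - γ) ^ 3) γ := by
    rw [hIeq]
    exact hDx.congr_of_eventuallyEq hderivA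
  -- positivity
  have hposint : 0 < ∫ M in Set.Ici (4 * m ^ 2),
      2 * rho m M * (M - a₁) * (M - a₂) / (M - γ) ^ 3 := by
    set f : ℝ → ℝ := fun M => 2 * rho m M * (M - a₁) * (M - a₂) / (M - γ) ^ 3 with hfdef
    have hfint : IntegrableOn f (Ici (4 * m ^ 2)) := by
      apply (iab.add ic).congr
      filter_upwards [ae_restrict_mem measurableSet_Ici] with M hM
      exact (hpoint M hM).symm
    rw [show (∫ M in Set.Ici (4 * m ^ 2), 2 * rho m M * (M - a₁) * (M - a₂) / (M - γ) ^ 3) =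
        ∫ M in Set.Ici (4 * m ^ 2), f M from rfl]
    have hnonneg : 0 ≤ᵐ[volume.restrict (Ici (4 * m ^ 2))] f := by
      filter_upwards [ae_restrict_mem measurableSet_Ici] with M hM
      have hM' : 4 * m ^ 2 ≤ M := hM
      have h1 : 0 < M - a₁ := by linarith
      have h2 : 0 < M - a₂ := by linarith
      have h3 : 0 < M - γ := by linarith
      have hr := rho_nonneg hm hM'
      positivity
    rw [integral_pos_iff_support_of_nonneg_ae hnonneg hfint]
    have hsub : Ioi (4 * m ^ 2) ⊆ Function.support f := by
      intro M hM
      have hM' : 4 * m ^ 2 < M := hM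
      have h1 : 0 < M - a₁ := by linarith
      have h2 : 0 < M - a₂ := by linarith
      have h3 : 0 < M - γ := by linarith
      have hr := rho_pos hm hM'
      have : 0 < f M := by positivity
      exact this.ne'
    calc (0 : ENNReal) < volume.restrict (Ici (4 * m ^ 2)) (Ioi (4 * m ^ 2)) := by
          rw [Measure.restrict_apply' measurableSet_Ici,
            inter_eq_self_of_subset_left Ioi_subset_Ici_self, Real.volume_Ioi]
          simp
      _ ≤ volume.restrict (Ici (4 * m ^ 2)) (Function.support f) := measure_mono hsub
  exact ⟨hdiff, hderiv2, hposint⟩
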